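/- Let X ⊆ ℝ^d and Y ⊆ ℝ^{d'} be nonempty compact convex sets and let h : X × Y → ℝ be continuous, λ₁-strongly convex in x for each fixed y ∈ Y, and λ₂-strongly concave in y for each fixed x ∈ X (with λ₁, λ₂ > 0). Let x̂(y) = argmin_{x'∈X} h(x', y) and ŷ(x) = argmax_{y'∈Y} h(x, y'). Then for any two pairs (x₀, y₀), (x₁, y₁) ∈ X × Y: (λ₁/4)‖x̂(y₁) − x₀‖² + (λ₂/4)‖ŷ(x₁) − y₀‖² ≤ [max_{y'∈Y} h(x₀, y') − min_{x'∈X} h(x', y₀)] + [max_{y'∈Y} h(x₁, y') − min_{x'∈X} h(x', y₁)]. -/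

import Mathlib

lemma strong_min_aux {E : Type*} [NormedAddCommGroup E] [InnerProductSpace ℝ E]
    {X : Set E} (hXcv : Convex ℝ X) {f : E → ℝ} {lam : ℝ}
    (hc : ConvexOn ℝ X (fun x => f x - lam / 2 * ‖x‖ ^ 2))
    {m x : E} (hm : m ∈ X) (hx : x ∈ X) (hmin : ∀ z ∈ X, f m ≤ f z) :
    lam / 4 * ‖m - x‖ ^ 2 ≤ f x - f m := by
  set c := (1/2 : ℝ) • m + (1/2 : ℝ) • x with hc_def
  have hcX : c ∈ X := hXcv hm hx (by norm_num) (by norm_num) (by norm_num)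
  have h1 : f c - lam / 2 * ‖c‖ ^ 2 ≤
      (1/2 : ℝ) * (f m - lam / 2 * ‖m‖ ^ 2) + (1/2 : ℝ) * (f x - lam / 2 * ‖x‖ ^ 2) :=
    hc.2 hm hx (by norm_num) (by norm_num) (by norm_num)
  have h2 : f m ≤ f c := hmin c hcX
  have hpar : ‖m + x‖ ^ 2 + ‖m - x‖ ^ 2 = 2 * ‖m‖ ^ 2 + 2 * ‖x‖ ^ 2 := by
    have := parallelogram_law_with_norm ℝ m x
    nlinarith [this]
  have hcn : ‖c‖ ^ 2 = ‖m + x‖ ^ 2 / 4 := by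
    have : c = (1/2 : ℝ) • (m + x) := by rw [hc_def, smul_add]
    rw [this, norm_smul]
    simp
    ring
  have hcn2 : ‖c‖ ^ 2 = (2 * ‖m‖ ^ 2 + 2 * ‖x‖ ^ 2 - ‖m - x‖ ^ 2) / 4 := by
    rw [hcn]; linarith
  have h4 := congrArg (fun t => lam / 2 * t) hcn2
  linarith [h1, h2, h4]


/-- Lemma 1 of Yan et al. (2020): for `h` λ₁-strongly convex in `x` and λ₂-strongly concave in
`y` on compact convex sets, the distances from `x₀, y₀` to the optimizers `x̂(y₁), ŷ(x₁)` are
controlled by the sum of the duality gaps of `(x₀,y₀)` and `(x₁,y₁)`. -/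
theorem stmt6 {d d' : ℕ}
    (X : Set (EuclideanSpace ℝ (Fin d))) (Y : Set (EuclideanSpace ℝ (Fin d')))
    (hXne : X.Nonempty) (hXcp : IsCompact X) (hXcv : Convex ℝ X)
    (hYne : Y.Nonempty) (hYcp : IsCompact Y) (hYcv : Convex ℝ Y)
    (h : EuclideanSpace ℝ (Fin d) → EuclideanSpace ℝ (Fin d') → ℝ)
    (lam₁ lam₂ : ℝ) (hlam₁ : 0 < lam₁) (hlam₂ : 0 < lam₂)
    (hcont : Continuous fun p : EuclideanSpace ℝ (Fin d) × EuclideanSpace ℝ (Fin d') =>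
      h p.1 p.2)
    (hscx : ∀ y ∈ Y, ConvexOn ℝ X (fun x => h x y - lam₁ / 2 * ‖x‖ ^ 2))
    (hscy : ∀ x ∈ X, ConcaveOn ℝ Y (fun y => h x y + lam₂ / 2 * ‖y‖ ^ 2))
    (xhat : EuclideanSpace ℝ (Fin d') → EuclideanSpace ℝ (Fin d))
    (yhat : EuclideanSpace ℝ (Fin d) → EuclideanSpace ℝ (Fin d'))
    (hxhat : ∀ y ∈ Y, xhat y ∈ X ∧ ∀ x ∈ X, h (xhat y) y ≤ h x y)
    (hyhat : ∀ x ∈ X, yhat x ∈ Y ∧ ∀ y ∈ Y, h x y ≤ h x (yhat x))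
    (x₀ x₁ : EuclideanSpace ℝ (Fin d)) (y₀ y₁ : EuclideanSpace ℝ (Fin d'))
    (hx₀ : x₀ ∈ X) (hx₁ : x₁ ∈ X) (hy₀ : y₀ ∈ Y) (hy₁ : y₁ ∈ Y) :
    lam₁ / 4 * ‖xhat y₁ - x₀‖ ^ 2 + lam₂ / 4 * ‖yhat x₁ - y₀‖ ^ 2 ≤
      (h x₀ (yhat x₀) - h (xhat y₀) y₀) + (h x₁ (yhat x₁) - h (xhat y₁) y₁) := by
  obtain ⟨hxy₁X, hxy₁min⟩ := hxhat y₁ hy₁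
  obtain ⟨hxy₀X, hxy₀min⟩ := hxhat y₀ hy₀
  obtain ⟨hyx₁Y, hyx₁max⟩ := hyhat x₁ hx₁
  obtain ⟨hyx₀Y, hyx₀max⟩ := hyhat x₀ hx₀
  have A : lam₁ / 4 * ‖xhat y₁ - x₀‖ ^ 2 ≤ h x₀ y₁ - h (xhat y₁) y₁ :=
    strong_min_aux hXcv (hscx y₁ hy₁) hxy₁X hx₀ hxy₁min
  have B : lam₂ / 4 * ‖yhat x₁ - y₀‖ ^ 2 ≤ (fun y => -h x₁ y) y₀ - (fun y => -h x₁ y) (yhat x₁) := by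
    refine strong_min_aux (f := fun y => -h x₁ y) (lam := lam₂) hYcv ?_ hyx₁Y hy₀ (fun z hz => by simpa using hyx₁max z hz)
    have := (hscy x₁ hx₁).neg
    refine this.congr (fun y _ => ?_)
    simp only [Pi.neg_apply]
    ring
  simp only at B
  have C : h x₀ y₁ ≤ h x₀ (yhat x₀) := hyx₀max y₁ hy₁
  have D : h (xhat y₀) y₀ ≤ h x₁ y₀ := hxy₀min x₁ hx₁
  linarith
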